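/- There is a universal constant C such that for all sufficiently small Δ > 0, all n ≥ 1, and sign σ ∈ {+1,−1}: ∑_{k=0}^{n} exp((k − (1/2 + σΔ)n)²/n) · binomial(n,k)·(1/2+σΔ)^k(1/2−σΔ)^{n−k} ≤ C. -/

import Mathlib

open Real MeasureTheory

lemma sinh_le_mul_cosh {a : ℝ} (ha : 0 ≤ a) : Real.sinh a ≤ a * Real.cosh a := by
  have key : ∀ x : ℝ, HasDerivAt (fun z => z * Real.cosh z - Real.sinh z) (x * Real.sinh x) x := by
    intro x
    have h1 := ((hasDerivAt_id x).mul (Real.hasDerivAt_cosh x)).sub (Real.hasDerivAt_sinh x)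
    refine h1.congr_deriv ?_
    simp [id]
  have mono : MonotoneOn (fun z => z * Real.cosh z - Real.sinh z) (Set.Ici 0) := by
    apply monotoneOn_of_deriv_nonneg (convex_Ici 0)
    · exact Continuous.continuousOn (by continuity)
    · intro x _
      exact (key x).differentiableAt.differentiableWithinAt
    · intro x hx
      rw [(key x).deriv]
      rw [interior_Ici] at hx
      exact mul_nonneg (le_of_lt hx) (Real.sinh_nonneg_iff.2 (le_of_lt hx))
  have h0 := mono (Set.self_mem_Ici) (show a ∈ Set.Ici 0 from ha) ha
  simp only [Real.cosh_zero, Real.sinh_zero, zero_mul, sub_zero, mul_zero] at h0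
  linarith

lemma exp_sub_one_le' {x : ℝ} (hx : 0 ≤ x) : Real.exp x - 1 ≤ x * Real.exp x := by
  have h1 := Real.add_one_le_exp (-x)
  have h2 : Real.exp (-x) * Real.exp x = 1 := by
    rw [← Real.exp_add]; simp
  nlinarith [Real.exp_pos x]

lemma aux2_nonneg {a : ℝ} (ha : 0 ≤ a) :
    |Real.sinh a - a * Real.exp (a^2/2)| ≤ 2*a^2 * Real.exp (a^2/2) := by
  have hE := Real.exp_pos (a^2/2)
  rw [abs_sub_le_iff]
  constructor
  · have h1 : Real.sinh a ≤ a * Real.cosh a := sinh_le_mul_cosh ha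
    have h2 : a * Real.cosh a ≤ a * Real.exp (a^2/2) :=
      mul_le_mul_of_nonneg_left (Real.cosh_le_exp_half_sq a) ha
    nlinarith [sq_nonneg a]
  · rcases le_or_gt a 4 with h4 | h4
    · have hs : a ≤ Real.sinh a := Real.self_le_sinh_iff.2 ha
      have he : Real.exp (a^2/2) - 1 ≤ (a^2/2) * Real.exp (a^2/2) :=
        exp_sub_one_le' (by positivity)
      nlinarith
    · have hs : 0 ≤ Real.sinh a := Real.sinh_nonneg_iff.2 ha
      nlinarith [mul_le_mul_of_nonneg_right (show a ≤ 2*a^2 by nlinarith) hE.le]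

lemma aux2 (a : ℝ) : |Real.sinh a - a * Real.exp (a^2/2)| ≤ 2*a^2 * Real.exp (a^2/2) := by
  rcases le_or_gt 0 a with ha | ha
  · exact aux2_nonneg ha
  · have h := aux2_nonneg (show 0 ≤ -a by linarith)
    have e1 : (-a)^2 = a^2 := by ring
    rw [e1, Real.sinh_neg] at h
    calc |Real.sinh a - a * Real.exp (a^2/2)|
        = |-Real.sinh a - -a * Real.exp (a ^ 2 / 2)| := by rw [← abs_neg]; ring_nf
      _ ≤ 2*a^2 * Real.exp (a^2/2) := h

lemma core_ineq {d : ℝ} (a : ℝ) (hd : |d| ≤ 1/2) :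
    Real.exp (-(2*a*d)) * (Real.cosh a + 2*d*Real.sinh a)
      ≤ Real.exp (a^2/2 + 4* |d| *a^2) := by
  have hE := Real.exp_pos (a^2/2)
  have h1 : Real.cosh a + 2*d*Real.sinh a
      ≤ Real.exp (a^2/2) * (1 + (2*a*d + 4* |d| *a^2)) := by
    have hcosh := Real.cosh_le_exp_half_sq a
    have habs := aux2 a
    have h2 : 2*d*(Real.sinh a - a * Real.exp (a^2/2))
        ≤ 2* |d| * (2*a^2*Real.exp (a^2/2)) := by
      calc 2*d*(Real.sinh a - a * Real.exp (a^2/2))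
          ≤ |2*d*(Real.sinh a - a * Real.exp (a^2/2))| := le_abs_self _
        _ = 2* |d| * |Real.sinh a - a * Real.exp (a^2/2)| := by
            rw [abs_mul, abs_mul, abs_of_nonneg (by norm_num : (0:ℝ) ≤ 2)]
        _ ≤ 2* |d| * (2*a^2*Real.exp (a^2/2)) :=
            mul_le_mul_of_nonneg_left habs (by positivity)
    nlinarith [abs_nonneg d]
  have h3 : 1 + (2*a*d + 4* |d| *a^2) ≤ Real.exp (2*a*d + 4* |d| *a^2) := by
    linarith [Real.add_one_le_exp (2*a*d + 4* |d| *a^2)]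
  calc Real.exp (-(2*a*d)) * (Real.cosh a + 2*d*Real.sinh a)
      ≤ Real.exp (-(2*a*d)) * (Real.exp (a^2/2) * Real.exp (2*a*d + 4* |d| *a^2)) := by
        apply mul_le_mul_of_nonneg_left _ (Real.exp_pos _).le
        exact h1.trans (mul_le_mul_of_nonneg_left h3 hE.le)
    _ = Real.exp (a^2/2 + 4* |d| *a^2) := by
        rw [← Real.exp_add, ← Real.exp_add]; ring_nf

lemma integrable_gauss (b : ℝ) : Integrable (fun t : ℝ => Real.exp (b*t - t^2/2)) := by
  have h : (fun t : ℝ => Real.exp (b*t - t^2/2))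
      = fun t : ℝ => Real.exp (b^2/2) * Real.exp (-(1/2) * (t - b)^2) := by
    funext t
    rw [← Real.exp_add]
    congr 1
    ring
  rw [h]
  exact ((integrable_exp_neg_mul_sq (by norm_num : (0:ℝ) < 1/2)).comp_sub_right b).const_mul _

lemma integral_gauss (b : ℝ) :
    (∫ t : ℝ, Real.exp (b*t - t^2/2)) = Real.sqrt (2*Real.pi) * Real.exp (b^2/2) := by
  have h : ∀ t : ℝ, Real.exp (b*t - t^2/2)
      = Real.exp (-(1/2) * (t - b)^2) * Real.exp (b^2/2) := by
    intro t
    rw [← Real.exp_add]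
    congr 1
    ring
  simp_rw [h]
  rw [integral_mul_const]
  have h2 : (∫ t : ℝ, Real.exp (-(1/2) * (t - b)^2))
      = ∫ t : ℝ, Real.exp (-(1/2) * t^2) := by
    have := integral_add_right_eq_self (μ := MeasureTheory.volume) (fun t : ℝ => Real.exp (-(1/2) * t^2)) (-b)
    simp only [← sub_eq_add_neg] at this
    exact this
  rw [h2]
  rw [show (fun t : ℝ => Real.exp (-(1/2) * t^2)) = fun t : ℝ => Real.exp (-(1/2) * t^2) from rfl]
  have h3 := integral_gaussian (1/2 : ℝ)
  simp only [neg_mul] at h3 ⊢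
  rw [h3, show Real.pi / (1/2) = 2 * Real.pi by ring]

/-- Sub-Gaussian property of the Binomial pmf: the `Binomial(n, 1/2 ± Δ)` law weighted by
the inverse Gaussian factor has uniformly bounded mass. -/
theorem stmt_18 : ∃ C : ℝ, ∃ δ₀ > (0:ℝ), ∀ Δ : ℝ, 0 < Δ → Δ ≤ δ₀ →
    ∀ n : ℕ, 1 ≤ n → ∀ σ : ℝ, σ = 1 ∨ σ = -1 →
    ∑ k ∈ Finset.range (n+1),
      Real.exp (((k : ℝ) - (1/2 + σ * Δ) * n) ^ 2 / n) *
        ((n.choose k : ℝ) * (1/2 + σ * Δ) ^ k * (1/2 - σ * Δ) ^ (n - k)) ≤ C := by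
  refine ⟨2, 1/16, by norm_num, ?_⟩
  intro Δ hΔ hΔ16 n hn σ hσ
  have hn0 : (0:ℝ) < (n:ℝ) := by
    have : 0 < n := by omega
    exact_mod_cast this
  set d : ℝ := σ * Δ with hd_def
  have habs : |d| ≤ 1/16 := by
    rcases hσ with h | h <;> rw [hd_def, h] <;>
      simp [abs_mul, abs_of_pos hΔ] <;> linarith
  have hd2 : |d| ≤ 1/2 := habs.trans (by norm_num)
  set p : ℝ := 1/2 + d with hp_def
  set q : ℝ := 1/2 - d with hq_def
  obtain ⟨habs1, habs2⟩ := abs_le.1 habs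
  have hp0 : 0 < p := by rw [hp_def]; linarith
  have hq0 : 0 < q := by rw [hq_def]; linarith
  have hqp : q = 1 - p := by rw [hp_def, hq_def]; ring
  set c : ℝ := Real.sqrt (2 / n) with hc_def
  have hc2 : c^2 = 2/(n:ℝ) := Real.sq_sqrt (by positivity)
  have hsπ : 0 < Real.sqrt (2*Real.pi) := Real.sqrt_pos.2 (by positivity)
  have step1 : (∑ k ∈ Finset.range (n+1),
      Real.exp (((k : ℝ) - p * n) ^ 2 / n) * ((n.choose k : ℝ) * p ^ k * q ^ (n - k)))
      = (Real.sqrt (2*Real.pi))⁻¹ * ∫ t : ℝ, ∑ k ∈ Finset.range (n+1),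
          ((n.choose k : ℝ) * p ^ k * q ^ (n - k)) *
            Real.exp ((((k:ℝ) - p*(n:ℝ))*c) * t - t^2/2) := by
    rw [MeasureTheory.integral_finset_sum _
      (fun k _ => (integrable_gauss _).const_mul _), Finset.mul_sum]
    refine Finset.sum_congr rfl (fun k hk => ?_)
    rw [MeasureTheory.integral_const_mul, integral_gauss]
    have hb : ((((k:ℝ) - p*(n:ℝ))*c))^2/2 = ((k:ℝ) - p*(n:ℝ))^2/n := by
      rw [mul_pow, hc2]
      field_simp
    rw [hb]
    field_simp
  have hpt : ∀ t : ℝ, (∑ k ∈ Finset.range (n+1),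
      ((n.choose k : ℝ) * p ^ k * q ^ (n - k)) *
        Real.exp ((((k:ℝ) - p*(n:ℝ))*c) * t - t^2/2)) ≤ Real.exp (-(1/8) * t^2) := by
    intro t
    have hsum : (∑ k ∈ Finset.range (n+1),
        ((n.choose k : ℝ) * p ^ k * q ^ (n - k)) *
          Real.exp ((((k:ℝ) - p*(n:ℝ))*c) * t - t^2/2))
        = (p * Real.exp ((c*t)*q) + q * Real.exp (-((c*t)*p)))^n * Real.exp (-(t^2/2)) := by
      rw [add_pow, Finset.sum_mul]
      refine Finset.sum_congr rfl (fun k hk => ?_)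
      have hkn : k ≤ n := Nat.lt_succ_iff.mp (Finset.mem_range.mp hk)
      have hnk : ((n - k : ℕ):ℝ) = (n:ℝ) - (k:ℝ) := by
        push_cast [Nat.cast_sub hkn]; ring
      have hexp : (((k:ℝ) - p*(n:ℝ))*c)*t - t^2/2
          = (k:ℝ)*((c*t)*q) + (((n:ℝ)-(k:ℝ))*(-((c*t)*p)) + -(t^2/2)) := by
        rw [hqp]; ring
      rw [mul_pow, mul_pow, ← Real.exp_nat_mul, ← Real.exp_nat_mul, hnk,
        hexp, Real.exp_add, Real.exp_add]
      ring
    rw [hsum]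
    have hXY : p * Real.exp ((c*t)*q) + q * Real.exp (-((c*t)*p))
        = Real.exp (-(2*((c*t)/2)*d)) * (Real.cosh ((c*t)/2) + 2*d*Real.sinh ((c*t)/2)) := by
      rw [Real.cosh_eq, Real.sinh_eq,
        show (c*t)*q = (c*t)/2 + -(2*((c*t)/2)*d) by rw [hq_def]; ring,
        show -((c*t)*p) = -((c*t)/2) + -(2*((c*t)/2)*d) by rw [hp_def]; ring,
        Real.exp_add, Real.exp_add]
      ring
    have hbound : p * Real.exp ((c*t)*q) + q * Real.exp (-((c*t)*p))
        ≤ Real.exp ((3/4) * ((c*t)/2)^2) := by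
      rw [hXY]
      refine (core_ineq ((c*t)/2) hd2).trans ?_
      apply Real.exp_le_exp.2
      nlinarith [sq_nonneg ((c*t)/2), abs_nonneg d,
        mul_le_mul_of_nonneg_right habs (sq_nonneg ((c*t)/2))]
    have hXY0 : 0 ≤ p * Real.exp ((c*t)*q) + q * Real.exp (-((c*t)*p)) := by positivity
    calc (p * Real.exp ((c*t)*q) + q * Real.exp (-((c*t)*p)))^n * Real.exp (-(t^2/2))
        ≤ (Real.exp ((3/4) * ((c*t)/2)^2))^n * Real.exp (-(t^2/2)) :=
          mul_le_mul_of_nonneg_right (pow_le_pow_left₀ hXY0 hbound n) (Real.exp_pos _).le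
      _ = Real.exp (-(1/8) * t^2) := by
          rw [← Real.exp_nat_mul, ← Real.exp_add]
          congr 1
          have hs2 : ((c*t)/2)^2 = t^2/(2*(n:ℝ)) := by
            rw [div_pow, mul_pow, hc2]
            field_simp
          rw [hs2]
          field_simp
          ring
  have step2 : (∫ t : ℝ, ∑ k ∈ Finset.range (n+1),
      ((n.choose k : ℝ) * p ^ k * q ^ (n - k)) *
        Real.exp ((((k:ℝ) - p*(n:ℝ))*c) * t - t^2/2))
      ≤ ∫ t : ℝ, Real.exp (-(1/8) * t^2) :=
    integral_mono
      (integrable_finset_sum _ (fun k _ => (integrable_gauss _).const_mul _))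
      (integrable_exp_neg_mul_sq (by norm_num)) hpt
  have step3 : (∫ t : ℝ, Real.exp (-(1/8) * t^2)) = 2 * Real.sqrt (2*Real.pi) := by
    rw [integral_gaussian (1/8 : ℝ),
      show Real.pi / (1/8:ℝ) = 2^2 * (2*Real.pi) by ring,
      Real.sqrt_mul (by norm_num : (0:ℝ) ≤ 2^2),
      Real.sqrt_sq (by norm_num : (0:ℝ) ≤ 2)]
  rw [step1]
  calc (Real.sqrt (2*Real.pi))⁻¹ * ∫ t : ℝ, ∑ k ∈ Finset.range (n+1),
      ((n.choose k : ℝ) * p ^ k * q ^ (n - k)) *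
        Real.exp ((((k:ℝ) - p*(n:ℝ))*c) * t - t^2/2)
      ≤ (Real.sqrt (2*Real.pi))⁻¹ * (2 * Real.sqrt (2*Real.pi)) :=
        mul_le_mul_of_nonneg_left (step2.trans step3.le) (inv_nonneg.2 hsπ.le)
    _ = 2 := by field_simp
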